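/- Let k ∈ [0,1) and define f₀(z) = z/(1−kz²). Then for every z ∈ 𝔻 one has (1−|z|²)² |S_{f₀}(z)| ≤ 6k, with equality at z = 0; consequently the Schwarzian norm ‖S_{f₀}‖ = sup_{z∈𝔻} (1−|z|²)² |S_{f₀}(z)| equals 6k. -/

import Mathlib

/-- The Schwarzian derivative `S_f = (f''/f')' - (1/2)(f''/f')²`. -/
noncomputable def schwarzian (f : ℂ → ℂ) (z : ℂ) : ℂ :=
  deriv (fun w => deriv (deriv f) w / deriv f w) z
    - (1 / 2) * (deriv (deriv f) z / deriv f z) ^ 2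

private lemma hasDerivAt_f0 (c z : ℂ) (h : 1 - c*z^2 ≠ 0) :
    HasDerivAt (fun w : ℂ => w / (1 - c*w^2))
      ((1 + c*z^2)/(1 - c*z^2)^2) z := by
  have hd : HasDerivAt (fun w : ℂ => 1 - c*w^2) (-(c*(2*z^1))) z :=
    ((hasDerivAt_pow 2 z).const_mul c).const_sub 1
  have := (hasDerivAt_id z).div hd h
  refine this.congr_deriv ?_
  simp only [id]
  field_simp
  ring

private lemma hasDerivAt_g0 (c z : ℂ) (h : 1 - c*z^2 ≠ 0) :
    HasDerivAt (fun w : ℂ => (1 + c*w^2)/(1 - c*w^2)^2)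
      (2*c*z*(3 + c*z^2)/(1 - c*z^2)^3) z := by
  have hn : HasDerivAt (fun w : ℂ => 1 + c*w^2) (c*(2*z^1)) z :=
    ((hasDerivAt_pow 2 z).const_mul c).const_add 1
  have hd0 : HasDerivAt (fun w : ℂ => 1 - c*w^2) (-(c*(2*z^1))) z :=
    ((hasDerivAt_pow 2 z).const_mul c).const_sub 1
  have hd : HasDerivAt (fun w : ℂ => (1 - c*w^2)^2)
      ((2:ℕ) * (1 - c*z^2)^1 * (-(c*(2*z^1)))) z := hd0.pow 2
  have := hn.div hd (pow_ne_zero 2 h)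
  refine this.congr_deriv ?_
  field_simp
  ring

private lemma hasDerivAt_q0 (c z : ℂ) (h : 1 - c^2*z^4 ≠ 0) :
    HasDerivAt (fun w : ℂ => (6*c*w + 2*c^2*w^3)/(1 - c^2*w^4))
      ((( 6*c + 2*c^2*(3*z^2)) * (1 - c^2*z^4) - (6*c*z + 2*c^2*z^3) * (-(c^2*(4*z^3))))
        / (1 - c^2*z^4)^2) z := by
  have hn : HasDerivAt (fun w : ℂ => 6*c*w + 2*c^2*w^3) (6*c + 2*c^2*(3*z^2)) z := by
    have h1 : HasDerivAt (fun w : ℂ => 6*c*w) (6*c*1) z := (hasDerivAt_id z).const_mul (6*c)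
    have h2 : HasDerivAt (fun w : ℂ => 2*c^2*w^3) (2*c^2*((3:ℕ)*z^2)) z :=
      (hasDerivAt_pow 3 z).const_mul (2*c^2)
    refine (h1.add h2).congr_deriv ?_
    push_cast; ring
  have hd : HasDerivAt (fun w : ℂ => 1 - c^2*w^4) (-(c^2*(4*z^3))) z := by
    have := ((hasDerivAt_pow 4 z).const_mul (c^2)).const_sub 1
    refine this.congr_deriv ?_
    norm_num
  exact hn.div hd h

private lemma one_sub_ne (x : ℂ) (h : ‖x‖ < 1) : 1 - x ≠ 0 := by
  intro h0
  have : x = 1 := by linear_combination -h0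
  simp [this] at h

private lemma one_add_ne (x : ℂ) (h : ‖x‖ < 1) : 1 + x ≠ 0 := by
  intro h0
  have : x = -1 := by linear_combination h0
  simp [this] at h

private lemma norm_small (k : ℝ) (hk0 : 0 ≤ k) (hk1 : k < 1) (w : ℂ) (hw : ‖w‖ < 1) :
    ‖(k : ℂ) * w^2‖ < 1 := by
  rw [norm_mul, norm_pow, Complex.norm_real, Real.norm_eq_abs, abs_of_nonneg hk0]
  nlinarith [norm_nonneg w]

private lemma schwarzian_formula (k : ℝ) (hk0 : 0 ≤ k) (hk1 : k < 1) (z : ℂ)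
    (hz : ‖z‖ < 1) :
    schwarzian (fun w : ℂ => w / (1 - (k : ℂ) * w^2)) z
      = 6 * (k : ℂ) / (1 + (k : ℂ) * z^2)^2 := by
  set c : ℂ := (k : ℂ) with hc
  have key : ∀ w : ℂ, ‖w‖ < 1 →
      (1 - c*w^2 ≠ 0 ∧ 1 + c*w^2 ≠ 0) := fun w hw =>
    ⟨one_sub_ne _ (norm_small k hk0 hk1 w hw),
     one_add_ne _ (norm_small k hk0 hk1 w hw)⟩
  -- the ball is open: eventually ‖w‖ < 1 near any point of the ball
  have hev : ∀ w : ℂ, ‖w‖ < 1 → ∀ᶠ u in nhds w, ‖u‖ < 1 := by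
    intro w hw
    have : Metric.ball (0:ℂ) 1 ∈ nhds w :=
      Metric.isOpen_ball.mem_nhds (mem_ball_zero_iff.2 hw)
    exact Filter.eventually_iff_exists_mem.2
      ⟨_, this, fun u hu => mem_ball_zero_iff.1 hu⟩
  set f : ℂ → ℂ := fun w => w / (1 - c*w^2) with hf
  -- first derivative, everywhere on the ball
  have e1 : ∀ w : ℂ, ‖w‖ < 1 → deriv f w = (1 + c*w^2)/(1 - c*w^2)^2 :=
    fun w hw => (hasDerivAt_f0 c w (key w hw).1).deriv
  -- second derivative on the ball
  have e2 : ∀ w : ℂ, ‖w‖ < 1 →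
      deriv (deriv f) w = 2*c*w*(3 + c*w^2)/(1 - c*w^2)^3 := by
    intro w hw
    have heq : deriv f =ᶠ[nhds w] (fun u => (1 + c*u^2)/(1 - c*u^2)^2) :=
      (hev w hw).mono fun u hu => e1 u hu
    rw [heq.deriv_eq, (hasDerivAt_g0 c w (key w hw).1).deriv]
  -- the quotient f''/f' agrees with q on the ball
  have hQ : (fun w => deriv (deriv f) w / deriv f w) =ᶠ[nhds z]
      (fun w => (6*c*w + 2*c^2*w^3)/(1 - c^2*w^4)) := by
    refine (hev z hz).mono fun w hw => ?_
    obtain ⟨h1, h2⟩ := key w hw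
    show deriv (deriv f) w / deriv f w
      = (6*c*w + 2*c^2*w^3)/(1 - c^2*w^4)
    rw [e1 w hw, e2 w hw]
    have hfac : (1 : ℂ) - c^2*w^4 = (1 - c*w^2)*(1 + c*w^2) := by ring
    rw [hfac]
    rw [div_div_div_comm, div_eq_div_iff (div_ne_zero (pow_ne_zero 3 h1) (pow_ne_zero 2 h1)) (mul_ne_zero h1 h2)]
    field_simp
    ring
  have hden : 1 - c^2*z^4 ≠ 0 := by
    obtain ⟨h1, h2⟩ := key z hz
    have : 1 - c^2*z^4 = (1 - c*z^2)*(1 + c*z^2) := by ring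
    rw [this]
    exact mul_ne_zero h1 h2
  obtain ⟨h1, h2⟩ := key z hz
  have hq : deriv (deriv f) z / deriv f z
      = (6*c*z + 2*c^2*z^3)/(1 - c^2*z^4) := hQ.eq_of_nhds
  rw [schwarzian, hQ.deriv_eq, (hasDerivAt_q0 c z hden).deriv, hq]
  have hcomb : ((6*c + 2*c^2*(3*z^2)) * (1 - c^2*z^4) - (6*c*z + 2*c^2*z^3) * (-(c^2*(4*z^3))))
        / (1 - c^2*z^4)^2
      - 1/2 * ((6*c*z + 2*c^2*z^3)/(1 - c^2*z^4))^2
      = ((6*c + 2*c^2*(3*z^2)) * (1 - c^2*z^4) - (6*c*z + 2*c^2*z^3) * (-(c^2*(4*z^3)))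
          - 1/2 * (6*c*z + 2*c^2*z^3)^2) / (1 - c^2*z^4)^2 := by
    rw [div_pow]
    ring
  rw [hcomb, div_eq_div_iff (pow_ne_zero 2 hden) (pow_ne_zero 2 h2)]
  have hfac : (1 : ℂ) - c^2*z^4 = (1 - c*z^2)*(1 + c*z^2) := by ring
  rw [hfac]
  ring

set_option maxHeartbeats 1000000 in
/-- For `f₀(z) = z/(1-kz²)` with `0 ≤ k < 1`, `(1-|z|²)² |S_{f₀}(z)| ≤ 6k` on `𝔻`,
with equality at `z = 0`; hence the Schwarzian norm of `f₀` equals `6k`. -/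
theorem schwarzian_norm_of_extremal_function
    (k : ℝ) (hk0 : 0 ≤ k) (hk1 : k < 1) :
    (∀ z : ℂ, ‖z‖ < 1 →
      (1 - ‖z‖ ^ 2) ^ 2 * ‖schwarzian (fun z : ℂ => z / (1 - (k : ℂ) * z ^ 2)) z‖ ≤ 6 * k) ∧
    (1 - ‖(0 : ℂ)‖ ^ 2) ^ 2 * ‖schwarzian (fun z : ℂ => z / (1 - (k : ℂ) * z ^ 2)) 0‖ = 6 * k ∧
    (⨆ z : Metric.ball (0 : ℂ) 1,
        (1 - ‖(z : ℂ)‖ ^ 2) ^ 2 *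
          ‖schwarzian (fun z : ℂ => z / (1 - (k : ℂ) * z ^ 2)) (z : ℂ)‖) = 6 * k := by
  have hbound : ∀ z : ℂ, ‖z‖ < 1 →
      (1 - ‖z‖ ^ 2) ^ 2 * ‖schwarzian (fun z : ℂ => z / (1 - (k : ℂ) * z ^ 2)) z‖ ≤ 6 * k := by
    intro z hz
    rw [schwarzian_formula k hk0 hk1 z hz]
    have h0 : (0:ℝ) < 1 - ‖z‖^2 := by nlinarith [norm_nonneg z]
    have hb : 1 - ‖z‖^2 ≤ ‖(1 : ℂ) + (k:ℂ)*z^2‖ := by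
      have h1 : ‖(1:ℂ)‖ - ‖(k:ℂ)*z^2‖ ≤ ‖(1:ℂ) + (k:ℂ)*z^2‖ := by
        have := norm_sub_norm_le (1:ℂ) (-((k:ℂ)*z^2))
        rw [sub_neg_eq_add, norm_neg] at this
        exact this
      have h2 : ‖(k:ℂ)*z^2‖ ≤ ‖z‖^2 := by
        rw [norm_mul, norm_pow, Complex.norm_real, Real.norm_eq_abs, abs_of_nonneg hk0]
        nlinarith [norm_nonneg z]
      simp only [norm_one] at h1
      linarith
    have hbpos : (0:ℝ) < ‖(1:ℂ) + (k:ℂ)*z^2‖ := lt_of_lt_of_le h0 hb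
    have h6 : ‖6 * (k:ℂ)‖ = 6*k := by
      rw [show (6 : ℂ) * (k:ℂ) = ((6*k : ℝ) : ℂ) by push_cast; ring,
        Complex.norm_real, Real.norm_eq_abs, abs_of_nonneg (by linarith)]
    rw [norm_div, norm_pow, h6]
    have hsq : (1 - ‖z‖^2)^2 ≤ ‖(1:ℂ) + (k:ℂ)*z^2‖^2 := by nlinarith
    calc (1 - ‖z‖ ^ 2) ^ 2 * (6 * k / ‖1 + (k:ℂ) * z ^ 2‖ ^ 2)
        ≤ ‖(1:ℂ) + (k:ℂ)*z^2‖^2 * (6 * k / ‖1 + (k:ℂ) * z ^ 2‖ ^ 2) :=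
          mul_le_mul_of_nonneg_right hsq (by positivity)
      _ = 6 * k := by
          rw [mul_comm, div_mul_cancel₀ _ (by positivity : ‖(1:ℂ) + (k:ℂ)*z^2‖^2 ≠ 0)]
  have he : (1 - ‖(0:ℂ)‖ ^ 2) ^ 2 *
      ‖schwarzian (fun z : ℂ => z / (1 - (k : ℂ) * z ^ 2)) 0‖ = 6 * k := by
    rw [schwarzian_formula k hk0 hk1 0 (by simp)]
    have h60 : (6 * (k:ℂ) / (1 + (k:ℂ)*0^2)^2) = ((6*k : ℝ) : ℂ) := by push_cast; ring
    rw [h60, Complex.norm_real, Real.norm_eq_abs, abs_of_nonneg (by linarith)]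
    simp
  refine ⟨hbound, he, ?_⟩
  haveI : Nonempty (Metric.ball (0:ℂ) 1) := ⟨⟨0, by simp⟩⟩
  set F : Metric.ball (0:ℂ) 1 → ℝ := fun z =>
    (1 - ‖(z : ℂ)‖ ^ 2) ^ 2 *
      ‖schwarzian (fun z : ℂ => z / (1 - (k : ℂ) * z ^ 2)) (z : ℂ)‖ with hF
  have hFle : ∀ z : Metric.ball (0:ℂ) 1, F z ≤ 6*k := fun z =>
    hbound (z : ℂ) (mem_ball_zero_iff.1 z.2)
  have hbdd : BddAbove (Set.range F) := ⟨6*k, by rintro y ⟨z, rfl⟩; exact hFle z⟩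
  have hF0 : F ⟨0, by simp⟩ = 6*k := he
  apply le_antisymm
  · exact ciSup_le hFle
  · exact hF0 ▸ le_ciSup hbdd (⟨0, by simp⟩ : Metric.ball (0:ℂ) 1)
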